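/- Let α be a complex number, n ≥ 1, and let P(z) = ∏_{i=1}^{n} (z − l_i) be a monic polynomial with distinct nonzero roots l₁, …, l_n satisfying the Laguerre differential equation z·P''(z) + (α + 1 − z)·P'(z) + n·P(z) = 0. Then the roots satisfy the Stieltjes electrostatic equations ∑_{j ≠ i} 2/(l_i − l_j) = 1 − (α + 1)/l_i for every i = 1, …, n. In particular, with α = −1 − 1/g, the points z_i = g·l_i satisfy the saddle point equations (1/g)(1 + 1/z_i) + ∑_{j≠i} 2/(z_j − z_i) = 0 of the Penner matrix model. -/

import Mathlib

open Polynomial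

theorem deriv_prod_X_sub_C_aux {ι : Type*} [DecidableEq ι] (l : ι → ℂ) (s : Finset ι) :
    Polynomial.derivative (∏ j ∈ s, (Polynomial.X - Polynomial.C (l j)))
      = ∑ k ∈ s, ∏ j ∈ s.erase k, (Polynomial.X - Polynomial.C (l j)) := by
  classical
  induction s using Finset.induction_on with
  | empty => simp
  | @insert a s ha ih =>
    rw [Finset.prod_insert ha, derivative_mul, ih, Finset.sum_insert ha,
      Finset.erase_insert ha]
    simp only [derivative_sub, derivative_X, derivative_C, sub_zero, one_mul]
    rw [Finset.mul_sum]
    have hcongr : ∑ k ∈ s, (Polynomial.X - Polynomial.C (l a)) *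
          ∏ j ∈ s.erase k, (Polynomial.X - Polynomial.C (l j))
        = ∑ k ∈ s, ∏ j ∈ (insert a s).erase k, (Polynomial.X - Polynomial.C (l j)) := by
      apply Finset.sum_congr rfl
      intro k hk
      rw [Finset.erase_insert_of_ne (by rintro rfl; exact ha hk),
        Finset.prod_insert (fun h => ha (Finset.mem_of_mem_erase h))]
    rw [hcongr, add_comm]

/-- Stieltjes electrostatic equations for the zeros of a Laguerre polynomial:
if the monic polynomial `P` with distinct nonzero roots `l₁, …, l_n` satisfies
`z P'' + (α + 1 − z) P' + n P = 0`, then `∑_{j≠i} 2/(lᵢ − lⱼ) = 1 − (α+1)/lᵢ` for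
every `i`; in particular, with `α = −1 − 1/g`, the points `zᵢ = g lᵢ` satisfy the
saddle point equations of the Penner matrix model. -/
theorem laguerre_zeros_stieltjes (α : ℂ) (n : ℕ) (hn : 1 ≤ n) (l : Fin n → ℂ)
    (hinj : Function.Injective l) (hl : ∀ i, l i ≠ 0)
    (P : Polynomial ℂ) (hP : P = ∏ i, (Polynomial.X - Polynomial.C (l i)))
    (hode : Polynomial.X * derivative (derivative P)
        + (Polynomial.C (α + 1) - Polynomial.X) * derivative P
        + Polynomial.C (n : ℂ) * P = 0) :
    (∀ i, ∑ j ∈ Finset.univ \ {i}, 2 / (l i - l j) = 1 - (α + 1) / l i) ∧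
    (∀ g : ℂ, g ≠ 0 → α = -1 - 1 / g →
      ∀ i, (1 / g) * (1 + 1 / (g * l i))
          + ∑ j ∈ Finset.univ \ {i}, 2 / (g * l j - g * l i) = 0) := by
  classical
  have hsd : ∀ i : Fin n, (Finset.univ \ {i} : Finset (Fin n)) = Finset.univ.erase i := by
    intro i
    ext j
    simp [Finset.mem_erase, and_comm]
  -- derivative of P as a sum of products
  have hP' : derivative P
      = ∑ k, ∏ j ∈ Finset.univ.erase k, (Polynomial.X - Polynomial.C (l j)) := by
    rw [hP, deriv_prod_X_sub_C_aux]
  -- evaluation of P at a root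
  have hevP : ∀ i, Polynomial.eval (l i) P = 0 := by
    intro i
    rw [hP, Polynomial.eval_prod]
    apply Finset.prod_eq_zero (Finset.mem_univ i)
    simp
  -- evaluation of P' at a root
  have hevP' : ∀ i, Polynomial.eval (l i) (derivative P)
      = ∏ j ∈ Finset.univ.erase i, (l i - l j) := by
    intro i
    rw [hP', Polynomial.eval_finset_sum]
    rw [Finset.sum_eq_single i]
    · simp [Polynomial.eval_prod]
    · intro k _ hk
      rw [Polynomial.eval_prod]
      apply Finset.prod_eq_zero (Finset.mem_erase.2 ⟨Ne.symm hk, Finset.mem_univ i⟩)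
      simp
    · simp
  -- evaluation of P'' at a root
  have hevP'' : ∀ i, Polynomial.eval (l i) (derivative (derivative P))
      = 2 * ∑ m ∈ Finset.univ.erase i,
          ∏ j ∈ (Finset.univ.erase i).erase m, (l i - l j) := by
    intro i
    rw [hP', derivative_sum]
    rw [Polynomial.eval_finset_sum]
    have hterm : ∀ k : Fin n,
        Polynomial.eval (l i) (derivative (∏ j ∈ Finset.univ.erase k,
          (Polynomial.X - Polynomial.C (l j))))
        = ∑ m ∈ (Finset.univ.erase k),
            ∏ j ∈ (Finset.univ.erase k).erase m, (l i - l j) := by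
      intro k
      rw [deriv_prod_X_sub_C_aux, Polynomial.eval_finset_sum]
      apply Finset.sum_congr rfl
      intro m _
      simp [Polynomial.eval_prod]
    rw [← Finset.sum_erase_add _ _ (Finset.mem_univ i), hterm i]
    have hrest : ∑ k ∈ Finset.univ.erase i,
        Polynomial.eval (l i) (derivative (∏ j ∈ Finset.univ.erase k,
          (Polynomial.X - Polynomial.C (l j))))
        = ∑ k ∈ Finset.univ.erase i,
            ∏ j ∈ (Finset.univ.erase i).erase k, (l i - l j) := by
      apply Finset.sum_congr rfl
      intro k hk
      rw [hterm k]
      have hik : i ∈ Finset.univ.erase k :=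
        Finset.mem_erase.2 ⟨Ne.symm (Finset.mem_erase.1 hk).1, Finset.mem_univ i⟩
      rw [Finset.sum_eq_single i]
      · rw [Finset.erase_right_comm]
      · intro m hm hmi
        apply Finset.prod_eq_zero
          (Finset.mem_erase.2 ⟨Ne.symm hmi, hik⟩)
        simp
      · intro h; exact absurd hik h
    rw [hrest]
    ring
  -- P'(l i) ≠ 0
  have hA : ∀ i, (∏ j ∈ Finset.univ.erase i, (l i - l j)) ≠ 0 := by
    intro i
    apply Finset.prod_ne_zero_iff.2
    intro j hj
    exact sub_ne_zero.2 fun h => (Finset.mem_erase.1 hj).1 (hinj h.symm)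
  -- the evaluated ODE
  have hev : ∀ i, l i * (2 * ∑ m ∈ Finset.univ.erase i,
          ∏ j ∈ (Finset.univ.erase i).erase m, (l i - l j))
      + (α + 1 - l i) * (∏ j ∈ Finset.univ.erase i, (l i - l j)) = 0 := by
    intro i
    have := congrArg (Polynomial.eval (l i)) hode
    simp only [Polynomial.eval_add, Polynomial.eval_mul, Polynomial.eval_X,
      Polynomial.eval_C, Polynomial.eval_sub, Polynomial.eval_zero,
      hevP i, hevP' i, hevP'' i, mul_zero, add_zero] at this
    linear_combination this
  -- the key sum identity
  have hsum : ∀ i, (∑ j ∈ Finset.univ.erase i, 2 / (l i - l j))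
      * (∏ j ∈ Finset.univ.erase i, (l i - l j))
      = 2 * ∑ m ∈ Finset.univ.erase i,
          ∏ j ∈ (Finset.univ.erase i).erase m, (l i - l j) := by
    intro i
    rw [Finset.sum_mul, Finset.mul_sum]
    apply Finset.sum_congr rfl
    intro j hj
    have hne : l i - l j ≠ 0 :=
      sub_ne_zero.2 fun h => (Finset.mem_erase.1 hj).1 (hinj h.symm)
    rw [← Finset.mul_prod_erase _ _ hj]
    field_simp
  have main : ∀ i, ∑ j ∈ Finset.univ \ {i}, 2 / (l i - l j) = 1 - (α + 1) / l i := by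
    intro i
    rw [hsd i]
    have hAi := hA i
    have hli := hl i
    have hevi := hev i
    have hsi := hsum i
    -- solve: S = 1 - (α+1)/l i  where  S * A = 2B and l i * 2B + (α+1-l i) * A = 0
    have h3 : (∑ j ∈ Finset.univ.erase i, 2 / (l i - l j)) * l i
          * (∏ j ∈ Finset.univ.erase i, (l i - l j))
        = (l i - (α + 1)) * (∏ j ∈ Finset.univ.erase i, (l i - l j)) := by
      linear_combination l i * hsi + hevi
    have h4 := mul_right_cancel₀ hAi h3
    have h5 : (∑ j ∈ Finset.univ.erase i, 2 / (l i - l j)) = (l i - (α + 1)) / l i := by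
      rw [eq_div_iff hli]; exact h4
    rw [h5, sub_div, div_self hli]
  refine ⟨main, ?_⟩
  intro g hg hα i
  have hli := hl i
  have h1 := main i
  have hstep : ∑ j ∈ Finset.univ \ {i}, 2 / (g * l j - g * l i)
      = -(1 / g) * ∑ j ∈ Finset.univ \ {i}, 2 / (l i - l j) := by
    rw [Finset.mul_sum]
    apply Finset.sum_congr rfl
    intro j hj
    have hne : l i - l j ≠ 0 := by
      rw [hsd i] at hj
      exact sub_ne_zero.2 fun h => (Finset.mem_erase.1 hj).1 (hinj h.symm)
    have h2 : g * l j - g * l i ≠ 0 := by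
      intro h
      exact mul_ne_zero hg hne (by linear_combination -h)
    rw [div_eq_iff h2]
    field_simp
    ring
  rw [hstep, h1, hα]
  field_simp
  ring
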